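/- For every positive integer t and every s ≥ t, and all strictly increasing sequences of row indices i_1 < ⋯ < i_s and column indices j_1 < ⋯ < j_s in {1, …, 2t} such that the column index set {j_1, …, j_s} contains all of t+1, t+2, …, 2t, the determinant of the s × s submatrix (𝖬_{i_k, j_l})_{1 ≤ k, l ≤ s} is strictly positive. -/

import Mathlib

open Finset

def pEnt (N a c : ℕ) : ℤ := if a ≤ c then ((N.choose (c - a) : ℕ) : ℤ) else 0

def pathMat {s : ℕ} (N a c : Fin s → ℕ) : Matrix (Fin s) (Fin s) ℤ :=
  fun k l => pEnt (N k) (a k) (c l)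

lemma pEnt_nonneg (N a c : ℕ) : 0 ≤ pEnt N a c := by
  unfold pEnt; split <;> positivity

lemma pEnt_pascal (N a c : ℕ) (hN : 1 ≤ N) :
    pEnt N a c = pEnt (N - 1) a c + pEnt (N - 1) (a + 1) c := by
  unfold pEnt
  rcases lt_trichotomy c a with h | h | h
  · rw [if_neg (by omega), if_neg (by omega), if_neg (by omega)]; ring
  · subst h
    rw [if_pos le_rfl, if_pos le_rfl, if_neg (by omega)]
    simp
  · rw [if_pos (by omega), if_pos (by omega), if_pos (by omega)]
    have h1 : c - a = (c - a - 1) + 1 := by omega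
    have h2 : N = (N - 1) + 1 := by omega
    rw [h1, h2, Nat.choose_succ_succ]
    have h3 : c - (a + 1) = c - a - 1 := by omega
    rw [h3]
    push_cast
    ring

lemma smono_val {s M : ℕ} {f : Fin s → Fin M} (hf : StrictMono f) :
    ∀ d : ℕ, ∀ k k' : Fin s, k.val + d ≤ k'.val → (f k).val + d ≤ (f k').val := by
  intro d
  induction d with
  | zero =>
      intro k k' h
      have : k ≤ k' := by omega
      simpa using (hf.monotone this)
  | succ d ih =>
      intro k k' h
      have hk' : 0 < k'.val := by omega
      set k'' : Fin s := ⟨k'.val - 1, by omega⟩ with hk''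
      have h1 : k.val + d ≤ k''.val := by simp [hk'']; omega
      have h2 := ih k k'' h1
      have h3 : k'' < k' := by simp [Fin.lt_def, hk'']; omega
      have h4 : (f k'').val < (f k').val := hf h3
      omega

/-- Theorem A: nonnegativity of binomial path determinants. -/
theorem pathMat_det_nonneg : ∀ (n : ℕ) {s : ℕ} (N a c : Fin s → ℕ),
    (∑ k, N k) = n →
    (∀ k l : Fin s, k < l → a k + (N k - N l) ≤ a l) →
    StrictMono c →
    0 ≤ (pathMat N a c).det := by
  intro n
  induction n using Nat.strong_induction_on with
  | _ n ih =>
  intro s N a c hsum hord hc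
  by_cases hrep : ∃ k l : Fin s, k < l ∧ N k = N l ∧ a k = a l
  · obtain ⟨k, l, hkl, hNe, hae⟩ := hrep
    have hre : (pathMat N a c) k = (pathMat N a c) l := by
      funext m; unfold pathMat; rw [hNe, hae]
    rw [Matrix.det_zero_of_row_eq (ne_of_lt hkl) hre]
  push_neg at hrep
  by_cases hN0 : ∀ k, N k = 0
  · -- base case
    rw [Matrix.det_apply']
    apply Finset.sum_nonneg
    intro σ _
    by_cases hσ : σ = 1
    · subst hσ
      simp only [Equiv.Perm.sign_one, Units.val_one, Int.cast_one, one_mul,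
        Equiv.Perm.one_apply]
      exact Finset.prod_nonneg fun i _ => pEnt_nonneg _ _ _
    · have hz : ∏ i, (pathMat N a c) (σ i) i = 0 := by
        by_contra hne
        replace hne : ∀ i ∈ Finset.univ, (pathMat N a c) (σ i) i ≠ 0 :=
          Finset.prod_ne_zero_iff.mp hne
        have key : ∀ i, a (σ i) = c i := by
          intro i
          have h := hne i (Finset.mem_univ i)
          unfold pathMat pEnt at h
          rw [hN0 (σ i)] at h
          split_ifs at h with hle
          · have h0 : c i - a (σ i) = 0 := by
              by_contra hm
              obtain ⟨m, hm'⟩ := Nat.exists_eq_succ_of_ne_zero hm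
              rw [hm', Nat.choose_zero_succ] at h
              simp at h
            omega
          · simp at h
        have ha : StrictMono a := by
          intro k l hkl
          have h1 := hord k l hkl
          have h2 := hrep k l hkl (by rw [hN0, hN0])
          omega
        have hσm : StrictMono (σ : Fin s → Fin s) := by
          intro i i' hii
          have h1 : a (σ i) < a (σ i') := by rw [key, key]; exact hc hii
          exact ha.lt_iff_lt.mp h1
        have hσinv : StrictMono ((σ⁻¹ : Equiv.Perm (Fin s)) : Fin s → Fin s) := by
          intro i i' hii
          rcases lt_trichotomy (σ⁻¹ i) (σ⁻¹ i') with h | h | h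
          · exact h
          · exfalso; apply ne_of_lt hii; rw [← σ.apply_symm_apply i, ← σ.apply_symm_apply i']
            show σ (σ⁻¹ i) = σ (σ⁻¹ i')
            rw [h]
          · exfalso
            have := hσm h
            simp only [Equiv.Perm.inv_def, Equiv.apply_symm_apply] at this
            omega
        have hle1 : ∀ i : Fin s, i.val ≤ (σ i).val := by
          intro i
          have := smono_val hσm i.val ⟨0, i.pos⟩ i (by simp)
          omega
        have hle2 : ∀ i : Fin s, i.val ≤ ((σ⁻¹ : Equiv.Perm (Fin s)) i).val := by
          intro i
          have := smono_val hσinv i.val ⟨0, i.pos⟩ i (by simp)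
          omega
        apply hσ
        ext i
        have h1 := hle1 i
        have h2 := hle2 (σ i)
        have h3 : (σ⁻¹ : Equiv.Perm (Fin s)) (σ i) = i := σ.symm_apply_apply i
        rw [h3] at h2
        simp only [Equiv.Perm.coe_one, id_eq]
        omega
      rw [hz, mul_zero]
  · -- inductive step
    obtain ⟨k0, hk0⟩ := not_forall.mp hN0
    obtain ⟨kM, -, hkM⟩ := Finset.exists_max_image Finset.univ N ⟨k0, Finset.mem_univ _⟩
    set S := Finset.univ.filter (fun k => N kM ≤ N k) with hS
    have hSne : S.Nonempty := ⟨kM, by simp [hS]⟩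
    set j := S.min' hSne with hj
    have hjS : j ∈ S := Finset.min'_mem _ _
    have hjmax : ∀ l, N l ≤ N j := by
      intro l
      have h1 : N kM ≤ N j := (Finset.mem_filter.mp hjS).2
      have h2 := hkM l (Finset.mem_univ l)
      omega
    have hjfirst : ∀ k, k < j → N k < N j := by
      intro k hk
      by_contra h
      push_neg at h
      have hkS : k ∈ S := by
        simp only [hS, Finset.mem_filter, Finset.mem_univ, true_and]
        have := (Finset.mem_filter.mp hjS).2
        omega
      have := Finset.min'_le S k hkS
      rw [← hj] at this
      exact absurd hk (not_lt.mpr this)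
    have hNj : 1 ≤ N j := by
      have := hjmax k0
      omega
    set N1 := Function.update N j (N j - 1) with hN1
    set a2 := Function.update a j (a j + 1) with ha2
    have hrow : pathMat N a c =
        (pathMat N1 a c).updateRow j (fun l => pEnt (N j) (a j) (c l)) := by
      ext k l
      by_cases hk : k = j
      · subst hk; rw [Matrix.updateRow_self]; rfl
      · rw [Matrix.updateRow_ne hk]
        unfold pathMat
        rw [hN1, Function.update_of_ne hk]
    have hadd : (fun l => pEnt (N j) (a j) (c l)) =
        (fun l => pEnt (N j - 1) (a j) (c l)) + (fun l => pEnt (N j - 1) (a j + 1) (c l)) := by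
      funext l
      exact pEnt_pascal _ _ _ hNj
    rw [hrow, hadd, Matrix.det_updateRow_add]
    have e1 : (pathMat N1 a c).updateRow j (fun l => pEnt (N j - 1) (a j) (c l)) =
        pathMat N1 a c := by
      have hr : (fun l => pEnt (N j - 1) (a j) (c l)) = (pathMat N1 a c) j := by
        funext l
        unfold pathMat
        rw [hN1, Function.update_self]
      rw [hr, Matrix.updateRow_eq_self]
    have e2 : (pathMat N1 a c).updateRow j (fun l => pEnt (N j - 1) (a j + 1) (c l)) =
        pathMat N1 a2 c := by
      ext k l
      by_cases hk : k = j
      · subst hk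
        rw [Matrix.updateRow_self]
        unfold pathMat
        rw [hN1, ha2, Function.update_self, Function.update_self]
      · rw [Matrix.updateRow_ne hk]
        unfold pathMat
        rw [hN1, ha2, Function.update_of_ne hk, Function.update_of_ne hk]
    rw [e1, e2]
    have hsplit : ∑ k, N k = N j + ∑ k ∈ Finset.univ.erase j, N k :=
      (Finset.add_sum_erase _ _ (Finset.mem_univ j)).symm
    have hsum1 : ∑ k, N1 k = n - 1 := by
      rw [hN1, Finset.sum_update_of_mem (Finset.mem_univ j),
        Finset.sdiff_singleton_eq_erase]
      omega
    have hnpos : 1 ≤ n := by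
      have : N j ≤ ∑ k, N k := Finset.single_le_sum (fun k _ => Nat.zero_le _) (Finset.mem_univ j)
      omega
    have hlt : n - 1 < n := by omega
    have hord1 : ∀ k l : Fin s, k < l → a k + (N1 k - N1 l) ≤ a l := by
      intro k l hkl
      have h0 := hord k l hkl
      by_cases hk : k = j
      · subst hk
        rw [hN1, Function.update_self, Function.update_of_ne (ne_of_gt hkl)]
        omega
      · by_cases hl : l = j
        · subst hl
          rw [hN1, Function.update_self, Function.update_of_ne hk]
          have := hjfirst k hkl
          omega
        · rw [hN1, Function.update_of_ne hk, Function.update_of_ne hl]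
          omega
    have hord2 : ∀ k l : Fin s, k < l → a2 k + (N1 k - N1 l) ≤ a2 l := by
      intro k l hkl
      have h0 := hord k l hkl
      by_cases hk : k = j
      · subst hk
        rw [hN1, ha2, Function.update_self, Function.update_self,
          Function.update_of_ne (ne_of_gt hkl), Function.update_of_ne (ne_of_gt hkl)]
        by_cases hNl : N l = N j
        · have hne := hrep j l hkl (by omega)
          omega
        · have := hjmax l
          omega
      · by_cases hl : l = j
        · subst hl
          rw [hN1, ha2, Function.update_self, Function.update_self,
            Function.update_of_ne hk, Function.update_of_ne hk]
          have := hjfirst k hkl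
          omega
        · rw [hN1, ha2, Function.update_of_ne hk, Function.update_of_ne hl,
            Function.update_of_ne hk, Function.update_of_ne hl]
          omega
    exact add_nonneg (ih (n - 1) hlt N1 a c hsum1 hord1 hc)
      (ih (n - 1) hlt N1 a2 c hsum1 hord2 hc)

/-- Theorem B: positivity of binomial path determinants given a family of
non-intersecting lattice path certificates. -/
theorem pathMat_det_pos : ∀ (n : ℕ) {s : ℕ} (N a c : Fin s → ℕ) (P : Fin s → ℕ → ℤ),
    (∑ k, N k) = n →
    (∀ k l : Fin s, k < l → a k + (N k - N l) ≤ a l) →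
    StrictMono c →
    (∀ k, P k 0 = (a k : ℤ)) →
    (∀ k, P k (N k) = (c k : ℤ)) →
    (∀ k m, m < N k → P k (m + 1) = P k m ∨ P k (m + 1) = P k m + 1) →
    (∀ k l : Fin s, k < l → ∀ d, d ≤ N k → d ≤ N l → P k (N k - d) < P l (N l - d)) →
    0 < (pathMat N a c).det := by
  intro n
  induction n using Nat.strong_induction_on with
  | _ n ih =>
  intro s N a c P hsum hord hc hP0 hPN hstep horder
  by_cases hN0 : ∀ k, N k = 0
  · -- base case : identity matrix
    have hac : ∀ k, a k = c k := by
      intro k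
      have h1 := hP0 k
      have h2 := hPN k
      rw [hN0 k] at h2
      rw [h1] at h2
      exact_mod_cast h2
    have hone : pathMat N a c = 1 := by
      ext k l
      unfold pathMat pEnt
      rw [hN0 k, hac k]
      by_cases hkl : k = l
      · subst hkl
        rw [if_pos le_rfl, Nat.sub_self, Nat.choose_self, Matrix.one_apply_eq,
          Nat.cast_one]
      · have hne : c k ≠ c l := fun h => hkl (hc.injective h)
        rw [Matrix.one_apply_ne hkl]
        by_cases hle : c k ≤ c l
        · rw [if_pos hle]
          have : c l - c k ≠ 0 := by omega
          obtain ⟨m, hm⟩ := Nat.exists_eq_succ_of_ne_zero this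
          rw [hm, Nat.choose_zero_succ]
          simp
        · rw [if_neg hle]
    rw [hone, Matrix.det_one]
    exact one_pos
  · -- inductive step
    obtain ⟨k0, hk0⟩ := not_forall.mp hN0
    obtain ⟨kM, -, hkM⟩ := Finset.exists_max_image Finset.univ N ⟨k0, Finset.mem_univ _⟩
    set S := Finset.univ.filter (fun k => N kM ≤ N k) with hS
    have hSne : S.Nonempty := ⟨kM, by simp [hS]⟩
    set j := S.min' hSne with hj
    have hjS : j ∈ S := Finset.min'_mem _ _
    have hjmax : ∀ l, N l ≤ N j := by
      intro l
      have h1 : N kM ≤ N j := (Finset.mem_filter.mp hjS).2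
      have h2 := hkM l (Finset.mem_univ l)
      omega
    have hjfirst : ∀ k, k < j → N k < N j := by
      intro k hk
      by_contra h
      push_neg at h
      have hkS : k ∈ S := by
        simp only [hS, Finset.mem_filter, Finset.mem_univ, true_and]
        have := (Finset.mem_filter.mp hjS).2
        omega
      have := Finset.min'_le S k hkS
      rw [← hj] at this
      exact absurd hk (not_lt.mpr this)
    have hNj : 1 ≤ N j := by
      have := hjmax k0
      omega
    -- strict inequality of `a` at equal `N`, from the certificate
    have hstrict : ∀ l : Fin s, j < l → N l = N j → a j < a l := by
      intro l hjl hNl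
      have h := horder j l hjl (N j) le_rfl (by omega)
      rw [Nat.sub_self, hP0 j] at h
      have : N l - N j = 0 := by omega
      rw [this, hP0 l] at h
      exact_mod_cast h
    set N1 := Function.update N j (N j - 1) with hN1
    set a2 := Function.update a j (a j + 1) with ha2
    have hrow : pathMat N a c =
        (pathMat N1 a c).updateRow j (fun l => pEnt (N j) (a j) (c l)) := by
      ext k l
      by_cases hk : k = j
      · subst hk; rw [Matrix.updateRow_self]; rfl
      · rw [Matrix.updateRow_ne hk]
        unfold pathMat
        rw [hN1, Function.update_of_ne hk]
    have hadd : (fun l => pEnt (N j) (a j) (c l)) =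
        (fun l => pEnt (N j - 1) (a j) (c l)) + (fun l => pEnt (N j - 1) (a j + 1) (c l)) := by
      funext l
      exact pEnt_pascal _ _ _ hNj
    have e1 : (pathMat N1 a c).updateRow j (fun l => pEnt (N j - 1) (a j) (c l)) =
        pathMat N1 a c := by
      have hr : (fun l => pEnt (N j - 1) (a j) (c l)) = (pathMat N1 a c) j := by
        funext l
        unfold pathMat
        rw [hN1, Function.update_self]
      rw [hr, Matrix.updateRow_eq_self]
    have e2 : (pathMat N1 a c).updateRow j (fun l => pEnt (N j - 1) (a j + 1) (c l)) =
        pathMat N1 a2 c := by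
      ext k l
      by_cases hk : k = j
      · subst hk
        rw [Matrix.updateRow_self]
        unfold pathMat
        rw [hN1, ha2, Function.update_self, Function.update_self]
      · rw [Matrix.updateRow_ne hk]
        unfold pathMat
        rw [hN1, ha2, Function.update_of_ne hk, Function.update_of_ne hk]
    have hdet : (pathMat N a c).det = (pathMat N1 a c).det + (pathMat N1 a2 c).det := by
      rw [hrow, hadd, Matrix.det_updateRow_add, e1, e2]
    have hsum1 : ∑ k, N1 k = n - 1 := by
      have hsplit : ∑ k, N k = N j + ∑ k ∈ Finset.univ.erase j, N k :=
        (Finset.add_sum_erase _ _ (Finset.mem_univ j)).symm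
      rw [hN1, Finset.sum_update_of_mem (Finset.mem_univ j),
        Finset.sdiff_singleton_eq_erase]
      omega
    have hnpos : 1 ≤ n := by
      have : N j ≤ ∑ k, N k := Finset.single_le_sum (fun k _ => Nat.zero_le _) (Finset.mem_univ j)
      omega
    have hlt : n - 1 < n := by omega
    have hord1 : ∀ k l : Fin s, k < l → a k + (N1 k - N1 l) ≤ a l := by
      intro k l hkl
      have h0 := hord k l hkl
      by_cases hk : k = j
      · subst hk
        rw [hN1, Function.update_self, Function.update_of_ne (ne_of_gt hkl)]
        omega
      · by_cases hl : l = j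
        · subst hl
          rw [hN1, Function.update_self, Function.update_of_ne hk]
          have := hjfirst k hkl
          omega
        · rw [hN1, Function.update_of_ne hk, Function.update_of_ne hl]
          omega
    have hord2 : ∀ k l : Fin s, k < l → a2 k + (N1 k - N1 l) ≤ a2 l := by
      intro k l hkl
      have h0 := hord k l hkl
      by_cases hk : k = j
      · subst hk
        rw [hN1, ha2, Function.update_self, Function.update_self,
          Function.update_of_ne (ne_of_gt hkl), Function.update_of_ne (ne_of_gt hkl)]
        by_cases hNl : N l = N j
        · have hne := hstrict l hkl hNl
          omega
        · have := hjmax l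
          omega
      · by_cases hl : l = j
        · subst hl
          rw [hN1, ha2, Function.update_self, Function.update_self,
            Function.update_of_ne hk, Function.update_of_ne hk]
          have := hjfirst k hkl
          omega
        · rw [hN1, ha2, Function.update_of_ne hk, Function.update_of_ne hl,
            Function.update_of_ne hk, Function.update_of_ne hl]
          omega
    -- new certificate
    set P1 := Function.update P j (fun m => P j (m + 1)) with hP1
    have hPN' : ∀ k, P1 k (N1 k) = (c k : ℤ) := by
      intro k
      by_cases hk : k = j
      · subst hk
        rw [hP1, hN1, Function.update_self, Function.update_self]
        have : N j - 1 + 1 = N j := by omega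
        rw [this, hPN j]
      · rw [hP1, hN1, Function.update_of_ne hk, Function.update_of_ne hk, hPN k]
    have hstep' : ∀ k m, m < N1 k → P1 k (m + 1) = P1 k m ∨ P1 k (m + 1) = P1 k m + 1 := by
      intro k m hm
      by_cases hk : k = j
      · subst hk
        simp only [hP1, hN1, Function.update_self] at hm ⊢
        exact hstep j (m + 1) (by omega)
      · simp only [hP1, hN1, Function.update_of_ne hk] at hm ⊢
        exact hstep k m hm
    have horder' : ∀ k l : Fin s, k < l → ∀ d, d ≤ N1 k → d ≤ N1 l →
        P1 k (N1 k - d) < P1 l (N1 l - d) := by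
      intro k l hkl d hdk hdl
      by_cases hk : k = j
      · subst hk
        simp only [hP1, hN1, Function.update_self,
          Function.update_of_ne (ne_of_gt hkl)] at hdk hdl ⊢
        have harith : N j - 1 - d + 1 = N j - d := by omega
        rw [harith]
        exact horder j l hkl d (by omega) hdl
      · by_cases hl : l = j
        · subst hl
          simp only [hP1, hN1, Function.update_self,
            Function.update_of_ne hk] at hdk hdl ⊢
          have harith : N j - 1 - d + 1 = N j - d := by omega
          rw [harith]
          exact horder k j hkl d hdk (by omega)
        · simp only [hP1, hN1, Function.update_of_ne hk,
            Function.update_of_ne hl] at hdk hdl ⊢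
          exact horder k l hkl d hdk hdl
    have hcase := hstep j 0 (by omega)
    rw [hP0 j] at hcase
    rcases hcase with hcA | hcB
    · -- recurse on (N1, a); other term nonneg
      have hP0' : ∀ k, P1 k 0 = (a k : ℤ) := by
        intro k
        by_cases hk : k = j
        · subst hk
          rw [hP1, Function.update_self]
          exact hcA
        · rw [hP1, Function.update_of_ne hk, hP0 k]
      have hpos := ih (n - 1) hlt N1 a c P1 hsum1 hord1 hc hP0' hPN' hstep' horder'
      have hnn := pathMat_det_nonneg (n - 1) N1 a2 c hsum1 hord2 hc
      rw [hdet]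
      exact add_pos_of_pos_of_nonneg hpos hnn
    · -- recurse on (N1, a2); other term nonneg
      have hP0' : ∀ k, P1 k 0 = (a2 k : ℤ) := by
        intro k
        by_cases hk : k = j
        · subst hk
          rw [hP1, ha2, Function.update_self, Function.update_self]
          rw [hcB]
          push_cast
          ring
        · rw [hP1, ha2, Function.update_of_ne hk, Function.update_of_ne hk, hP0 k]
      have hpos := ih (n - 1) hlt N1 a2 c P1 hsum1 hord2 hc hP0' hPN' hstep' horder'
      have hnn := pathMat_det_nonneg (n - 1) N1 a c hsum1 hord1 hc
      rw [hdet]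
      exact add_pos_of_nonneg_of_pos hnn hpos

/-- Certificate function: non-intersecting lattice paths, "greedy minimal" family. -/
def Xc {s : ℕ} (T : ℕ) (af cf start : Fin s → ℕ) (k : Fin s) (τ : ℕ) : ℤ :=
  (insert k (Finset.univ.filter (fun j => j ≤ k ∧ start j ≤ τ))).sup'
    (Finset.insert_nonempty _ _)
    (fun j => max (af j : ℤ) ((cf j : ℤ) + (τ : ℤ) - (T : ℤ)) + ((k.val : ℤ) - (j.val : ℤ)))

/-- The `2t × 2t` integer block matrix `𝖬 = [[M1, M2], [0, M3]]`, where (in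
1-based indices) `M1 = (C(t+i−1, j−1))`, `M2 = (C(t+i−1, t+j−1))` and
`M3 = (C(t−i, j−i))` are `t × t` matrices.  In 0-based global indices
`i, j : Fin (2t)`, the top half (`i < t`) has entry `C(t+i, j)` and the bottom
half (`i ≥ t`) has entry `C(2t−i−1, j−i)` for `i ≤ j` and `0` otherwise. -/
def fujimotoM (t : ℕ) : Matrix (Fin (2 * t)) (Fin (2 * t)) ℤ :=
  fun i j =>
    if i.val < t then ((t + i.val).choose j.val : ℤ)
    else if i.val ≤ j.val then ((2 * t - i.val - 1).choose (j.val - i.val) : ℤ)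
    else 0

/-- For every positive integer `t`, every `s ≥ t`, and all strictly increasing
row indices `i_1 < ⋯ < i_s` and column indices `j_1 < ⋯ < j_s` in `{1, …, 2t}`
such that the column index set contains all of `t+1, …, 2t`, the corresponding
`s × s` minor of `𝖬` is strictly positive. -/
theorem fujimotoM_minor_pos (t : ℕ) (ht : 1 ≤ t)
    (s : ℕ) (hs : t ≤ s)
    (r : Fin s → Fin (2 * t)) (c : Fin s → Fin (2 * t))
    (hr : StrictMono r) (hc : StrictMono c)
    (hcol : ∀ j : Fin (2 * t), t ≤ j.val → j ∈ Set.range c) :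
    0 < Matrix.det (fun k l => fujimotoM t (r k) (c l)) := by
  classical
  set T : ℕ := 2 * t - 1 with hT
  set Nf : Fin s → ℕ := fun k => if (r k).val < t then t + (r k).val else 2 * t - (r k).val - 1
    with hNf
  set af : Fin s → ℕ := fun k => if (r k).val < t then 0 else (r k).val with haf
  set cf : Fin s → ℕ := fun l => (c l).val with hcf
  set start : Fin s → ℕ := fun k => T - Nf k with hstart
  have hspos : 0 < s := by omega
  -- basic bounds
  have hr2t : ∀ k, (r k).val < 2 * t := fun k => (r k).isLt
  have hc2t : ∀ l, (c l).val < 2 * t := fun l => (c l).isLt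
  have klr : ∀ k : Fin s, k.val ≤ (r k).val := by
    intro k
    have := smono_val hr k.val ⟨0, hspos⟩ k (by simp)
    omega
  have klc : ∀ k : Fin s, k.val ≤ (c k).val := by
    intro k
    have := smono_val hc k.val ⟨0, hspos⟩ k (by simp)
    omega
  have rmono : ∀ k l : Fin s, k.val ≤ l.val → (r k).val + (l.val - k.val) ≤ (r l).val := by
    intro k l h
    have := smono_val hr (l.val - k.val) k l (by omega)
    omega
  have cmono : ∀ k l : Fin s, k.val ≤ l.val → (c k).val + (l.val - k.val) ≤ (c l).val := by
    intro k l h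
    have := smono_val hc (l.val - k.val) k l (by omega)
    omega
  have cfmono : ∀ k l : Fin s, k.val ≤ l.val → cf k + (l.val - k.val) ≤ cf l := cmono
  have cf2t : ∀ l : Fin s, cf l < 2 * t := hc2t
  have Rlast : ∀ k : Fin s, (r k).val + s ≤ k.val + 2 * t := by
    intro k
    have h1 := rmono k ⟨s - 1, by omega⟩ (by simp; omega)
    have h2 := hr2t ⟨s - 1, by omega⟩
    simp at h1
    omega
  have Clast : ∀ k : Fin s, (c k).val + s ≤ k.val + 2 * t := by
    intro k
    have h1 := cmono k ⟨s - 1, by omega⟩ (by simp; omega)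
    have h2 := hc2t ⟨s - 1, by omega⟩
    simp at h1
    omega
  -- big columns: choice function
  have hcol' : ∀ i : Fin t, ∃ l : Fin s, c l = ⟨t + i.val, by omega⟩ := by
    intro i
    exact hcol ⟨t + i.val, by omega⟩ (by simp)
  choose g hg using hcol'
  have hgval : ∀ i, (c (g i)).val = t + i.val := by
    intro i; rw [hg i]
  have hgmono : StrictMono g := by
    intro i i' hii
    have h1 : (c (g i)).val < (c (g i')).val := by
      rw [hgval, hgval]; omega
    have := hc.lt_iff_lt (a := g i) (b := g i')
    rw [← this]
    exact Fin.lt_def.mpr h1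
  have hgbound : ∀ i : Fin t, (g i).val + t ≤ s + i.val := by
    intro i
    have h1 := smono_val hgmono (t - 1 - i.val) i ⟨t - 1, by omega⟩ (by simp; omega)
    have h2 : (g ⟨t - 1, by omega⟩).val < s := (g _).isLt
    omega
  -- feasibility
  have feas1 : ∀ k, af k ≤ cf k := by
    intro k
    by_cases hk : (r k).val < t
    · simp [haf, hcf, hk]
    · simp only [haf, hcf, if_neg hk]
      push_neg at hk
      have h1 := Rlast k
      have hi : k.val + t - s < t := by omega
      have h2 : (g ⟨k.val + t - s, hi⟩).val + t ≤ s + (k.val + t - s) := by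
        simpa using hgbound ⟨k.val + t - s, hi⟩
      have h3 : g ⟨k.val + t - s, hi⟩ ≤ k := by
        rw [Fin.le_def]; omega
      have h4 : (c (g ⟨k.val + t - s, hi⟩)).val ≤ (c k).val := hc.monotone h3
      have h5 : (c (g ⟨k.val + t - s, hi⟩)).val = t + (k.val + t - s) := by
        simpa using hgval ⟨k.val + t - s, hi⟩
      omega
  have feas2 : ∀ k, cf k ≤ af k + Nf k := by
    intro k
    by_cases hk : (r k).val < t
    · simp only [haf, hcf, hNf, if_pos hk]
      have h1 := Clast k
      have h2 := klr k
      omega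
    · simp only [haf, hcf, hNf, if_neg hk]
      have h1 := hc2t k
      push_neg at hk
      omega
  -- ordering hypothesis
  have hordM : ∀ k l : Fin s, k < l → af k + (Nf k - Nf l) ≤ af l := by
    intro k l hkl
    have h1 : (r k).val < (r l).val := hr hkl
    by_cases h2 : (r k).val < t <;> by_cases h3 : (r l).val < t <;>
      simp only [haf, hNf, if_pos, if_neg, h2, h3, if_true, if_false] <;>
      omega
  -- matrix identification
  have hmat : (fun k l => fujimotoM t (r k) (c l)) = pathMat Nf af cf := by
    funext k l
    unfold fujimotoM pathMat pEnt
    by_cases hk : (r k).val < t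
    · simp only [hNf, haf, hcf, if_pos hk]
      rw [if_pos (Nat.zero_le _), Nat.sub_zero]
    · simp only [hNf, haf, hcf, if_neg hk]
  rw [hmat]
  -- the certificate
  set P : Fin s → ℕ → ℤ := fun k m => Xc T af cf start k (start k + m) with hP
  have hNleT : ∀ k, Nf k ≤ T := by
    intro k
    by_cases hk : (r k).val < t <;>
      simp only [hNf, hT, hk, if_true, if_false] <;> omega
  have hstartNf : ∀ k, start k + Nf k = T := by
    intro k
    have := hNleT k
    simp only [hstart]
    omega
  have hcf' : StrictMono cf := by
    intro k l hkl
    exact hc hkl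
  -- sup' manipulation helpers
  have hXle : ∀ (k : Fin s) (τ : ℕ) (b : ℤ),
      (∀ j : Fin s, (j = k ∨ (j ≤ k ∧ start j ≤ τ)) →
        max (af j : ℤ) ((cf j : ℤ) + (τ : ℤ) - (T : ℤ)) + ((k.val : ℤ) - (j.val : ℤ)) ≤ b) →
      Xc T af cf start k τ ≤ b := by
    intro k τ b h
    apply Finset.sup'_le
    intro j hj
    apply h
    simpa [Finset.mem_insert, Finset.mem_filter] using hj
  have hleX : ∀ (k j : Fin s) (τ : ℕ), (j = k ∨ (j ≤ k ∧ start j ≤ τ)) →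
      max (af j : ℤ) ((cf j : ℤ) + (τ : ℤ) - (T : ℤ)) + ((k.val : ℤ) - (j.val : ℤ)) ≤
        Xc T af cf start k τ := by
    intro k j τ hj
    have hmem : j ∈ insert k (Finset.univ.filter (fun j => j ≤ k ∧ start j ≤ τ)) := by
      simpa [Finset.mem_insert, Finset.mem_filter] using hj
    exact Finset.le_sup'
      (fun j => max (af j : ℤ) ((cf j : ℤ) + (τ : ℤ) - (T : ℤ)) + ((k.val : ℤ) - (j.val : ℤ)))
      hmem
  -- no strictly earlier row is active at the start of a top row
  have L1 : ∀ j k : Fin s, j < k → start j ≤ start k → t ≤ (r k).val := by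
    intro j k h1 h2
    by_contra h
    push_neg at h
    have hrj : (r j).val < (r k).val := hr h1
    have hNfk : Nf k = t + (r k).val := by simp only [hNf, if_pos h]
    have hNfj : Nf j = t + (r j).val := by simp only [hNf, if_pos (by omega : (r j).val < t)]
    have e1 := hstartNf k
    have e2 := hstartNf j
    omega
  have hafr : ∀ j : Fin s, af j ≤ (r j).val := by
    intro j
    by_cases hj : (r j).val < t <;> simp only [haf, hj, if_true, if_false] <;> omega
  -- (i) start of each path
  have hP0 : ∀ k, P k 0 = (af k : ℤ) := by
    intro k
    simp only [hP, Nat.add_zero]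
    apply le_antisymm
    · apply hXle
      rintro j (rfl | ⟨hjk, hjs⟩)
      · have h2 := feas2 j
        have h3 := hstartNf j
        rw [← le_sub_iff_add_le, max_le_iff]
        constructor <;> omega
      · rcases eq_or_lt_of_le hjk with rfl | hjk'
        · have h2 := feas2 j
          have h3 := hstartNf j
          rw [← le_sub_iff_add_le, max_le_iff]
          constructor <;> omega
        · have hbot := L1 j k hjk' hjs
          have hafk : af k = (r k).val := by
            simp only [haf]
            rw [if_neg (show ¬ (r k).val < t by omega)]
          have hNfk : Nf k = 2 * t - (r k).val - 1 := by
            simp only [hNf]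
            rw [if_neg (show ¬ (r k).val < t by omega)]
          have h1 := hafr j
          have h2 := rmono j k (le_of_lt (Fin.lt_def.mp hjk'))
          have h3 := cfmono j k (le_of_lt (Fin.lt_def.mp hjk'))
          have h4 := cf2t k
          have h5 := hstartNf k
          have h6 : j.val < k.val := Fin.lt_def.mp hjk'
          rw [← le_sub_iff_add_le, max_le_iff]
          constructor <;> omega
    · have h := hleX k k (start k) (Or.inl rfl)
      have h2 := le_max_left ((af k : ℤ)) ((cf k : ℤ) + ((start k : ℕ) : ℤ) - (T : ℤ))
      omega
  -- (ii) end of each path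
  have hPN : ∀ k, P k (Nf k) = (cf k : ℤ) := by
    intro k
    simp only [hP, hstartNf k]
    apply le_antisymm
    · apply hXle
      rintro j (rfl | ⟨hjk, hjs⟩)
      · have h1 := feas1 j
        rw [← le_sub_iff_add_le, max_le_iff]
        constructor <;> omega
      · have h1 := feas1 j
        have h2 := cfmono j k (Fin.le_def.mp hjk)
        have h3 : j.val ≤ k.val := Fin.le_def.mp hjk
        rw [← le_sub_iff_add_le, max_le_iff]
        constructor <;> omega
    · have h := hleX k k T (Or.inl rfl)
      have h2 := le_max_right ((af k : ℤ)) ((cf k : ℤ) + ((T : ℕ) : ℤ) - (T : ℤ))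
      omega
  -- (iii) unit steps
  have hstep : ∀ (k : Fin s) (m : ℕ), m < Nf k →
      P k (m + 1) = P k m ∨ P k (m + 1) = P k m + 1 := by
    intro k m hm
    have hτ : start k + (m + 1) = (start k + m) + 1 := by omega
    simp only [hP, hτ]
    set τ := start k + m with hτdef
    have hdn : Xc T af cf start k τ ≤ Xc T af cf start k (τ + 1) := by
      apply hXle
      rintro j hj
      have h := hleX k j (τ + 1) (by tauto)
      have h2 : max ((af j : ℤ)) ((cf j : ℤ) + (τ : ℤ) - (T : ℤ)) ≤
          max ((af j : ℤ)) ((cf j : ℤ) + ((τ + 1 : ℕ) : ℤ) - (T : ℤ)) := by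
        apply max_le_max le_rfl
        push_cast
        omega
      omega
    have hup : Xc T af cf start k (τ + 1) ≤ Xc T af cf start k τ + 1 := by
      apply hXle
      rintro j hj
      have hjk : j ≤ k := by rcases hj with rfl | ⟨h, _⟩; exact le_rfl; exact h
      by_cases hjτ : start j ≤ τ
      · have h := hleX k j τ (Or.inr ⟨hjk, hjτ⟩)
        have h2 : max ((af j : ℤ)) ((cf j : ℤ) + ((τ + 1 : ℕ) : ℤ) - (T : ℤ)) ≤
            max ((af j : ℤ)) ((cf j : ℤ) + (τ : ℤ) - (T : ℤ)) + 1 := by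
          apply max_le
          · have := le_max_left ((af j : ℤ)) ((cf j : ℤ) + (τ : ℤ) - (T : ℤ))
            omega
          · have := le_max_right ((af j : ℤ)) ((cf j : ℤ) + (τ : ℤ) - (T : ℤ))
            push_cast at this ⊢
            omega
        omega
      · -- entering row: start j = τ + 1
        have hjs : start j ≤ τ + 1 := by
          rcases hj with rfl | ⟨-, h⟩
          · omega
          · exact h
        have hsj : start j = τ + 1 := by omega
        have hjne : j ≠ k := by
          intro hjeq
          rw [hjeq] at hsj
          omega
        have hjk' : j < k := lt_of_le_of_ne hjk hjne
        have hjkv : j.val < k.val := Fin.lt_def.mp hjk'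
        have hmj : max ((af j : ℤ)) ((cf j : ℤ) + ((τ + 1 : ℕ) : ℤ) - (T : ℤ)) ≤ (af j : ℤ) := by
          apply max_le le_rfl
          have h1 := feas2 j
          have h2 := hstartNf j
          push_cast
          omega
        by_cases hk : (r k).val < t
        · -- k is a top row: use the witness j+1
          have hj'lt : j.val + 1 < s := by omega
          set j' : Fin s := ⟨j.val + 1, hj'lt⟩ with hj'def
          have hj'val : j'.val = j.val + 1 := rfl
          have hj'k : j' ≤ k := by
            rw [Fin.le_def]
            omega
          have hrj' : (r j).val + 1 ≤ (r j').val := by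
            have := rmono j j' (by omega)
            omega
          have hrj'k : (r j').val ≤ (r k).val := Fin.le_def.mp (hr.monotone hj'k)
          have hrjt : (r j).val < t := by omega
          have hrj't : (r j').val < t := by omega
          have hNfj : Nf j = t + (r j).val := by simp only [hNf, if_pos hrjt]
          have hNfj' : Nf j' = t + (r j').val := by simp only [hNf, if_pos hrj't]
          have hafj : af j = 0 := by simp only [haf, if_pos hrjt]
          have hact : start j' ≤ τ := by
            have e1 := hstartNf j
            have e2 := hstartNf j'
            omega
          have hw := hleX k j' τ (Or.inr ⟨hj'k, hact⟩)
          have hw2 := le_max_left ((af j' : ℤ)) ((cf j' : ℤ) + (τ : ℤ) - (T : ℤ))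
          have hj'v : (j'.val : ℤ) = (j.val : ℤ) + 1 := by
            rw [hj'val]; push_cast; ring
          have haf0 : (0 : ℤ) ≤ (af j' : ℤ) := by positivity
          omega
        · -- k is a bottom row
          have hafk : af k = (r k).val := by simp only [haf, if_neg hk]
          have hw := hleX k k τ (Or.inl rfl)
          have hw2 := le_max_left ((af k : ℤ)) ((cf k : ℤ) + (τ : ℤ) - (T : ℤ))
          have h1 := hafr j
          have h2 := rmono j k (le_of_lt hjkv)
          omega
    omega
  -- (iv) strict ordering of the paths
  have horder : ∀ k l : Fin s, k < l → ∀ d, d ≤ Nf k → d ≤ Nf l →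
      P k (Nf k - d) < P l (Nf l - d) := by
    intro k l hkl d hdk hdl
    have hklv : k.val < l.val := Fin.lt_def.mp hkl
    have e1 : start k + (Nf k - d) = T - d := by
      have := hstartNf k
      omega
    have e2 : start l + (Nf l - d) = T - d := by
      have := hstartNf l
      omega
    simp only [hP, e1, e2]
    have hkact : start k ≤ T - d := by
      have := hstartNf k
      omega
    have hbound : Xc T af cf start k (T - d) ≤ Xc T af cf start l (T - d) - 1 := by
      apply hXle
      rintro j hj
      have hjk : j ≤ k ∧ start j ≤ T - d := by
        rcases hj with rfl | h
        · exact ⟨le_rfl, hkact⟩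
        · exact h
      have hjl : j ≤ l := le_trans hjk.1 (le_of_lt hkl)
      have h := hleX l j (T - d) (Or.inr ⟨hjl, hjk.2⟩)
      have hjkv : j.val ≤ k.val := Fin.le_def.mp hjk.1
      omega
    omega
  exact pathMat_det_pos (∑ k, Nf k) Nf af cf P rfl hordM hcf' hP0 hPN hstep horder
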